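/- The polynomial f^[2](x) - x, where f(x) = x² - 2, factors over ℚ as (x - 2)(x + 1)(x² + x - 1), and the set of preperiodic points of f in the quadratic field ℚ(√5) is {0, ±1, ±2, (±1 ± √5)/2}. -/

import Mathlib

open Polynomial


private lemma aux_orbit_finite {x : ℝ} {s : Set ℝ} (hs : s.Finite) (hx : x ∈ s)
    (hstep : ∀ z ∈ s, z ^ 2 - 2 ∈ s) :
    (Set.range fun k : ℕ => (fun y : ℝ => y ^ 2 - 2)^[k] x).Finite := by
  apply hs.subset
  rintro _ ⟨k, rfl⟩
  induction k with
  | zero => simpa using hx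
  | succ n ih =>
    show (fun y : ℝ => y ^ 2 - 2)^[n+1] x ∈ s
    rw [Function.iterate_succ_apply']
    exact hstep _ ih

private lemma aux_pigeon {α : Type*} {c : ℕ → α} (h : (Set.range c).Finite) :
    ∃ m n, m < n ∧ c m = c n := by
  have hni : ¬ Function.Injective c := fun hinj => (Set.infinite_range_of_injective hinj) h
  obtain ⟨m, n, hmn, hne⟩ := Function.not_injective_iff.mp hni
  rcases lt_or_gt_of_ne hne with h' | h'
  · exact ⟨m, n, h', hmn⟩
  · exact ⟨n, m, h', hmn.symm⟩

private lemma aux_abs_le_two {z : ℝ} {m n : ℕ} (hmn : m < n)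
    (h : (fun y : ℝ => y ^ 2 - 2)^[m] z = (fun y : ℝ => y ^ 2 - 2)^[n] z) : |z| ≤ 2 := by
  by_contra hz
  push_neg at hz
  have inv : ∀ k, 2 < |(fun y : ℝ => y ^ 2 - 2)^[k] z| := by
    intro k
    induction k with
    | zero => simpa using hz
    | succ k ih =>
      rw [Function.iterate_succ_apply']
      set w := (fun y : ℝ => y ^ 2 - 2)^[k] z with hw
      have h2 : (2:ℝ) < w ^ 2 - 2 := by nlinarith [sq_abs w, ih]
      calc (2:ℝ) < w ^ 2 - 2 := h2
        _ ≤ |w ^ 2 - 2| := le_abs_self _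
  have mono : StrictMono (fun k => |(fun y : ℝ => y ^ 2 - 2)^[k] z|) := by
    apply strictMono_nat_of_lt_succ
    intro k
    show |(fun y : ℝ => y ^ 2 - 2)^[k] z| < |(fun y : ℝ => y ^ 2 - 2)^[k+1] z|
    rw [Function.iterate_succ_apply']
    set w := (fun y : ℝ => y ^ 2 - 2)^[k] z with hw
    have h1 : 2 < |w| := inv k
    have h2 : |w| < w ^ 2 - 2 := by nlinarith [sq_abs w]
    calc |w| < w ^ 2 - 2 := h2
      _ ≤ |w ^ 2 - 2| := le_abs_self _
  exact (mono hmn).ne (congrArg abs h)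

private noncomputable def auxQ : ℕ → Polynomial ℤ
  | 0 => X
  | (k+1) => auxQ k ^ 2 - C 2

private lemma auxQ_aeval (z : ℝ) : ∀ k, Polynomial.aeval z (auxQ k) = (fun y : ℝ => y ^ 2 - 2)^[k] z
  | 0 => by simp [auxQ]
  | (k+1) => by
    rw [Function.iterate_succ_apply']
    simp [auxQ, auxQ_aeval z k, map_ofNat]

private lemma auxQ_monic_natDegree : ∀ k, (auxQ k).Monic ∧ (auxQ k).natDegree = 2 ^ k
  | 0 => ⟨monic_X, natDegree_X⟩
  | (k+1) => by
    obtain ⟨h, hd⟩ := auxQ_monic_natDegree k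
    have hdeg : degree (C (2:ℤ)) < degree (auxQ k ^ 2) := by
      apply lt_of_le_of_lt degree_C_le
      rw [degree_eq_natDegree (h.pow 2).ne_zero, h.natDegree_pow, hd]
      exact_mod_cast Nat.pos_of_ne_zero (by positivity)
    refine ⟨(h.pow 2).sub_of_left hdeg, ?_⟩
    show (auxQ k ^ 2 - C 2).natDegree = 2 ^ (k+1)
    rw [natDegree_sub_C, h.natDegree_pow, hd, pow_succ]
    ring

private lemma aux_isIntegral {z : ℝ} {m n : ℕ} (hmn : m < n)
    (h : (fun y : ℝ => y ^ 2 - 2)^[m] z = (fun y : ℝ => y ^ 2 - 2)^[n] z) :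
    IsIntegral ℤ z := by
  refine ⟨auxQ n - auxQ m, ?_, ?_⟩
  · apply (auxQ_monic_natDegree n).1.sub_of_left
    rw [degree_eq_natDegree (auxQ_monic_natDegree m).1.ne_zero,
      degree_eq_natDegree (auxQ_monic_natDegree n).1.ne_zero,
      (auxQ_monic_natDegree m).2, (auxQ_monic_natDegree n).2]
    exact_mod_cast Nat.pow_lt_pow_right one_lt_two hmn
  · show Polynomial.aeval z (auxQ n - auxQ m) = 0
    rw [map_sub, auxQ_aeval, auxQ_aeval, h, sub_self]

private lemma aux_rat_int {q : ℚ} (h : IsIntegral ℤ ((q : ℝ))) : ∃ u : ℤ, (u : ℚ) = q := by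
  have h2 : IsIntegral ℤ q := by
    rwa [show ((q:ℝ)) = algebraMap ℚ ℝ q from rfl,
      isIntegral_algebraMap_iff (algebraMap ℚ ℝ).injective] at h
  exact IsIntegrallyClosed.isIntegral_iff.mp h2


set_option maxHeartbeats 1000000 in
private theorem second_aux_hard (x : ℝ)
    (hrep : ∃ a b : ℚ, x = a + b * Real.sqrt 5)
    (hfin : (Set.range fun k : ℕ => (fun y : ℝ => y ^ 2 - 2)^[k] x).Finite) :
    x ∈ ({0, 1, -1, 2, -2, (1 + Real.sqrt 5) / 2, (1 - Real.sqrt 5) / 2,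
          (-1 + Real.sqrt 5) / 2, (-1 - Real.sqrt 5) / 2} : Set ℝ) := by
  set s5 := Real.sqrt 5 with hs5
  have h5 : s5 ^ 2 = 5 := Real.sq_sqrt (by norm_num)
  have h5irr : Irrational s5 := by
    have h := (Nat.prime_five).irrational_sqrt
    exact_mod_cast h
  obtain ⟨a, b, hx⟩ := hrep
  set g : ℚ × ℚ → ℚ × ℚ := fun p => (p.1 ^ 2 + 5 * p.2 ^ 2 - 2, 2 * p.1 * p.2) with hg
  set y : ℝ := (a : ℝ) - (b : ℝ) * s5 with hy
  -- orbit formulas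
  have horb : ∀ k, (fun y : ℝ => y ^ 2 - 2)^[k] x
      = ((g^[k] (a, b)).1 : ℝ) + ((g^[k] (a, b)).2 : ℝ) * s5 := by
    intro k
    induction k with
    | zero => simpa using hx
    | succ k ih =>
      rw [Function.iterate_succ_apply', Function.iterate_succ_apply', ih]
      show _ = ((g (g^[k] (a, b))).1 : ℝ) + ((g (g^[k] (a, b))).2 : ℝ) * s5
      simp only [hg]
      push_cast
      linear_combination ((g^[k] (a, b)).2 : ℝ) ^ 2 * h5
  have horb' : ∀ k, (fun y : ℝ => y ^ 2 - 2)^[k] y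
      = ((g^[k] (a, b)).1 : ℝ) - ((g^[k] (a, b)).2 : ℝ) * s5 := by
    intro k
    induction k with
    | zero => simpa using hy
    | succ k ih =>
      rw [Function.iterate_succ_apply', Function.iterate_succ_apply', ih]
      show _ = ((g (g^[k] (a, b))).1 : ℝ) - ((g (g^[k] (a, b))).2 : ℝ) * s5
      simp only [hg]
      push_cast
      linear_combination ((g^[k] (a, b)).2 : ℝ) ^ 2 * h5
  -- injectivity of coefficient map
  have hj : Function.Injective (fun p : ℚ × ℚ => (p.1 : ℝ) + (p.2 : ℝ) * s5) := by
    rintro ⟨p1, p2⟩ ⟨q1, q2⟩ h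
    simp only at h
    by_cases hq : p2 = q2
    · subst hq
      have : (p1 : ℝ) = q1 := by linarith
      have : p1 = q1 := by exact_mod_cast this
      simp [this]
    · exfalso
      apply h5irr
      refine ⟨(p1 - q1) / (q2 - p2), ?_⟩
      have hne : ((q2 : ℝ) - p2) ≠ 0 := by
        intro hc
        apply hq
        have : (p2 : ℝ) = q2 := by linarith
        exact_mod_cast this
      push_cast
      field_simp
      linarith
  -- pigeonhole on coefficients
  have hcfin : (Set.range fun k => g^[k] (a, b)).Finite := by
    apply Set.Finite.of_finite_image _ (hj.injOn)
    have himg : (fun p : ℚ × ℚ => (p.1 : ℝ) + (p.2 : ℝ) * s5) '' (Set.range fun k => g^[k] (a, b))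
        = Set.range fun k : ℕ => (fun y : ℝ => y ^ 2 - 2)^[k] x := by
      rw [← Set.range_comp]
      apply congrArg
      funext k
      exact (horb k).symm
    rw [himg]
    exact hfin
  obtain ⟨m, n, hmn, hEq⟩ := aux_pigeon hcfin
  have hxm : (fun y : ℝ => y ^ 2 - 2)^[m] x = (fun y : ℝ => y ^ 2 - 2)^[n] x := by
    rw [horb m, horb n, hEq]
  have hym : (fun y : ℝ => y ^ 2 - 2)^[m] y = (fun y : ℝ => y ^ 2 - 2)^[n] y := by
    rw [horb' m, horb' n, hEq]
  have hxb : |x| ≤ 2 := aux_abs_le_two hmn hxm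
  have hyb : |y| ≤ 2 := aux_abs_le_two hmn hym
  have hxint : IsIntegral ℤ x := aux_isIntegral hmn hxm
  have hyint : IsIntegral ℤ y := aux_isIntegral hmn hym
  -- trace and norm are integers
  obtain ⟨u, hu⟩ : ∃ u : ℤ, (u : ℚ) = 2 * a := by
    apply aux_rat_int
    have : ((2 * a : ℚ) : ℝ) = x + y := by push_cast; rw [hx, hy]; ring
    rw [this]
    exact hxint.add hyint
  obtain ⟨v, hv⟩ : ∃ v : ℤ, (v : ℚ) = a ^ 2 - 5 * b ^ 2 := by
    apply aux_rat_int
    have : ((a ^ 2 - 5 * b ^ 2 : ℚ) : ℝ) = x * y := by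
      push_cast; rw [hx, hy]; linear_combination ((b:ℝ)^2) * h5
    rw [this]
    exact hxint.mul hyint
  -- 2b is an integer
  obtain ⟨r, hr⟩ : ∃ r : ℤ, (r : ℚ) = 10 * b := by
    apply aux_rat_int
    refine ⟨X ^ 2 - C (5 * (u ^ 2 - 4 * v)), monic_X_pow_sub_C _ (by norm_num), ?_⟩
    have h20 : ((u : ℚ)) ^ 2 - 4 * (v : ℚ) = 20 * b ^ 2 := by
      rw [hu, hv]; ring
    have : ((10 * b : ℚ) : ℝ) ^ 2 = ((5 * (u ^ 2 - 4 * v) : ℤ) : ℝ) := by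
      push_cast
      have : ((u : ℚ) : ℝ) ^ 2 - 4 * ((v : ℚ) : ℝ) = 20 * ((b : ℚ) : ℝ) ^ 2 := by
        exact_mod_cast congrArg (fun q : ℚ => (q : ℝ)) h20
      push_cast at this
      linarith
    simp only [eval₂_sub, eval₂_X_pow, eval₂_C, map_sub, map_pow, aeval_X, aeval_C]
    rw [this]
    simp [algebraMap_int_eq]
  have hr2 : r ^ 2 = 5 * (u ^ 2 - 4 * v) := by
    have hq : ((r : ℚ)) ^ 2 = 100 * b ^ 2 := by rw [hr]; ring
    have h20 : ((u : ℚ)) ^ 2 - 4 * (v : ℚ) = 20 * b ^ 2 := by rw [hu, hv]; ring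
    have hc : ((r ^ 2 : ℤ) : ℚ) = ((5 * (u ^ 2 - 4 * v) : ℤ) : ℚ) := by
      push_cast
      linarith
    exact_mod_cast hc
  have h5r : (5 : ℤ) ∣ r := by
    have hp : Prime (5 : ℤ) := by norm_num
    exact hp.dvd_of_dvd_pow (n := 2) ⟨u ^ 2 - 4 * v, hr2⟩
  obtain ⟨t, ht⟩ := h5r
  have htb : (t : ℚ) = 2 * b := by
    have : ((5 * t : ℤ) : ℚ) = 10 * b := by rw [← ht]; exact hr
    push_cast at this
    linarith
  have htw : u ^ 2 - 4 * v = 5 * t ^ 2 := by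
    have h25 : (5 * t) ^ 2 = 5 * (u ^ 2 - 4 * v) := by rw [← ht]; exact hr2
    nlinarith [h25]
  -- express x and y
  have hxf : x = ((u : ℝ) + (t : ℝ) * s5) / 2 := by
    rw [hx]
    have h1 : ((u : ℚ) : ℝ) = 2 * (a : ℝ) := by exact_mod_cast congrArg (fun q : ℚ => (q : ℝ)) hu
    have h2 : ((t : ℚ) : ℝ) = 2 * (b : ℝ) := by exact_mod_cast congrArg (fun q : ℚ => (q : ℝ)) htb
    push_cast at h1 h2
    rw [h1, h2]
    ring
  have hyf : y = ((u : ℝ) - (t : ℝ) * s5) / 2 := by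
    rw [hy]
    have h1 : ((u : ℚ) : ℝ) = 2 * (a : ℝ) := by exact_mod_cast congrArg (fun q : ℚ => (q : ℝ)) hu
    have h2 : ((t : ℚ) : ℝ) = 2 * (b : ℝ) := by exact_mod_cast congrArg (fun q : ℚ => (q : ℝ)) htb
    push_cast at h1 h2
    rw [h1, h2]
    ring
  -- bounds
  obtain ⟨hx1, hx2⟩ := abs_le.mp hxb
  obtain ⟨hy1, hy2⟩ := abs_le.mp hyb
  have hs5gt : (2 : ℝ) < s5 := by nlinarith [Real.sqrt_nonneg 5, h5]
  rw [hxf] at hx1 hx2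
  rw [hyf] at hy1 hy2
  have hvxy : ((v : ℤ) : ℝ) = x * y := by
    have h1 : ((v : ℚ) : ℝ) = ((a ^ 2 - 5 * b ^ 2 : ℚ) : ℝ) := by exact_mod_cast congrArg (fun q : ℚ => (q : ℝ)) hv
    push_cast at h1 ⊢
    rw [h1, hx, hy]
    linear_combination ((b : ℝ) ^ 2) * h5
  have hub1 : (-4 : ℤ) ≤ u := by
    have : (-4 : ℝ) ≤ (u : ℝ) := by linarith
    exact_mod_cast this
  have hub2 : u ≤ 4 := by
    have : ((u : ℝ)) ≤ 4 := by linarith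
    exact_mod_cast this
  have hvb1 : (-4 : ℤ) ≤ v := by
    have : (-4 : ℝ) ≤ (v : ℝ) := by nlinarith [hvxy]
    exact_mod_cast this
  have hvb2 : v ≤ 4 := by
    have : ((v : ℝ)) ≤ 4 := by nlinarith [hvxy]
    exact_mod_cast this
  have hu16 : u ^ 2 ≤ 16 := by nlinarith
  have h5t : 5 * t ^ 2 ≤ 32 := by linarith [htw]
  have htb1 : (-2 : ℤ) ≤ t := by nlinarith [h5t]
  have htb2 : t ≤ 2 := by nlinarith [h5t]
  have hv4 : u ^ 2 - 5 * t ^ 2 = 4 * v := by linarith [htw]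
  simp only [Set.mem_insert_iff, Set.mem_singleton_iff]
  clear hfin horb horb' hj hcfin hEq hxm hym hxb hyb hxint hyint hu hv hr hr2 ht htb htw hvxy hx hy h5irr hyf hmn
  interval_cases t <;> interval_cases u <;>
    first
      | omega
      | (exfalso; push_cast at hx1 hx2 hy1 hy2; linarith)
      | (rw [hxf]; push_cast;
         first
           | (left; ring1)
           | (right; left; ring1)
           | (right; right; left; ring1)
           | (right; right; right; left; ring1)
           | (right; right; right; right; left; ring1)
           | (right; right; right; right; right; left; ring1)
           | (right; right; right; right; right; right; left; ring1)
           | (right; right; right; right; right; right; right; left; ring1)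
           | (right; right; right; right; right; right; right; right; ring1)
        )

private theorem second_aux_easy (x : ℝ)
    (hmem : x ∈ ({0, 1, -1, 2, -2, (1 + Real.sqrt 5) / 2, (1 - Real.sqrt 5) / 2,
          (-1 + Real.sqrt 5) / 2, (-1 - Real.sqrt 5) / 2} : Set ℝ)) :
    (∃ a b : ℚ, x = a + b * Real.sqrt 5) ∧
      (Set.range fun k : ℕ => (fun y : ℝ => y ^ 2 - 2)^[k] x).Finite := by
  set s5 := Real.sqrt 5 with hs5
  have h5 : s5 ^ 2 = 5 := Real.sq_sqrt (by norm_num)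
  set S : Set ℝ := {0, 1, -1, 2, -2, (1 + s5) / 2, (1 - s5) / 2,
          (-1 + s5) / 2, (-1 - s5) / 2} with hS
  constructor
  · simp only [hS, Set.mem_insert_iff, Set.mem_singleton_iff] at hmem
    rcases hmem with rfl|rfl|rfl|rfl|rfl|rfl|rfl|rfl|rfl
    · exact ⟨0, 0, by norm_num⟩
    · exact ⟨1, 0, by norm_num⟩
    · exact ⟨-1, 0, by norm_num⟩
    · exact ⟨2, 0, by norm_num⟩
    · exact ⟨-2, 0, by norm_num⟩
    · exact ⟨1/2, 1/2, by push_cast; ring⟩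
    · exact ⟨1/2, -1/2, by push_cast; ring⟩
    · exact ⟨-1/2, 1/2, by push_cast; ring⟩
    · exact ⟨-1/2, -1/2, by push_cast; ring⟩
  · have hSfin : S.Finite := by
      simp only [hS]
      repeat apply Set.Finite.insert
      exact Set.finite_singleton _
    have hstep : ∀ z ∈ S, z ^ 2 - 2 ∈ S := by
      simp only [hS, Set.mem_insert_iff, Set.mem_singleton_iff]
      rintro z (rfl|rfl|rfl|rfl|rfl|rfl|rfl|rfl|rfl)
      · norm_num
      · norm_num
      · norm_num
      · norm_num
      · norm_num
      · right; right; right; right; right; right; right; left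
        linear_combination h5 / 4
      · right; right; right; right; right; right; right; right
        linear_combination h5 / 4
      · right; right; right; right; right; right; right; right
        linear_combination h5 / 4
      · right; right; right; right; right; right; right; left
        linear_combination h5 / 4
    exact aux_orbit_finite hSfin hmem hstep

theorem second_iterate_factorization_and_quadratic_preperiodic :
    ((X ^ 2 - C 2 : Polynomial ℚ).comp (X ^ 2 - C 2) - X =
        (X - C 2) * (X + C 1) * (X ^ 2 + X - C 1)) ∧
      {x : ℝ | (∃ a b : ℚ, x = a + b * Real.sqrt 5) ∧
          (Set.range fun k : ℕ => (fun y : ℝ => y ^ 2 - 2)^[k] x).Finite} =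
        ({0, 1, -1, 2, -2, (1 + Real.sqrt 5) / 2, (1 - Real.sqrt 5) / 2,
          (-1 + Real.sqrt 5) / 2, (-1 - Real.sqrt 5) / 2} : Set ℝ) := by
  constructor
  · simp only [sub_comp, pow_comp, X_comp, C_comp]
    simp only [map_ofNat C 2, map_one C]
    ring
  · ext x
    simp only [Set.mem_setOf_eq]
    constructor
    · rintro ⟨hrep, hfin⟩
      exact second_aux_hard x hrep hfin
    · intro hmem
      exact second_aux_easy x hmem
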